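/- Let f ∈ H and let p_1, …, p_n ∈ E be points whose Gram matrix A_n is positive definite. Then the Aveiro approximation f*_{A_n} equals the orthogonal projection of f onto the linear span of {h(p_1), …, h(p_n)}; in particular f − f*_{A_n} is orthogonal to h(p_j) for every j = 1, …, n. -/
import Mathlib


open scoped ComplexInnerProductSpace ComplexOrder

/-- **Aveiro Method: the approximation is the orthogonal projection onto the span.**
With the setup of the Aveiro method (Gram matrix `A` positive definite), the Aveiro
approximation `f*_A` equals the orthogonal projection of `f` onto
`span {h (p 1), …, h (p n)}`; this is expressed by the characterizing properties:
`f*_A` belongs to the span and `f - f*_A` is orthogonal to every element of the span —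
in particular `f - f*_A` is orthogonal to each `h (p j)`. -/
theorem stmt1 {H : Type*} [NormedAddCommGroup H] [InnerProductSpace ℂ H] [CompleteSpace H]
    {E : Type*} (h : E → H) (n : ℕ) (p : Fin n → E) (f : H)
    (A : Matrix (Fin n) (Fin n) ℂ)
    (hA : ∀ j k, A j k = ⟪h (p j), h (p k)⟫)
    (hpos : A.PosDef)
    (fstar : H)
    (hfstar : fstar = ∑ j : Fin n, ∑ k : Fin n,
      (⟪h (p j), f⟫ * (starRingEnd ℂ) (A⁻¹ j k)) • h (p k)) :
    fstar ∈ Submodule.span ℂ (Set.range fun j => h (p j)) ∧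
    (∀ g ∈ Submodule.span ℂ (Set.range fun j => h (p j)), ⟪g, f - fstar⟫ = 0) ∧
    (∀ j : Fin n, ⟪h (p j), f - fstar⟫ = 0) := by
  have hHerm : A.IsHermitian := hpos.isHermitian
  have hHermInv : (A⁻¹).IsHermitian := hHerm.inv
  have hmul : A * A⁻¹ = 1 := Matrix.mul_nonsing_inv A (isUnit_iff_ne_zero.mpr (ne_of_gt hpos.det_pos))
  have key : ∀ j : Fin n, ⟪h (p j), f - fstar⟫ = 0 := by
    intro j
    rw [inner_sub_right, hfstar]
    simp only [inner_sum, inner_smul_right]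
    have : ∀ j' k : Fin n,
        ⟪h (p j'), f⟫ * (starRingEnd ℂ) (A⁻¹ j' k) * ⟪h (p j), h (p k)⟫
        = ⟪h (p j'), f⟫ * (A j k * A⁻¹ k j') := by
      intro j' k
      have h1 : (starRingEnd ℂ) (A⁻¹ j' k) = A⁻¹ k j' := by
        have := congrFun (congrFun hHermInv k) j'
        simpa [Matrix.conjTranspose_apply] using this
      rw [h1, ← hA]
      ring
    simp only [this]
    rw [sub_eq_zero]
    have : ∀ j' : Fin n, ∑ k : Fin n, ⟪h (p j'), f⟫ * (A j k * A⁻¹ k j')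
        = ⟪h (p j'), f⟫ * (A * A⁻¹) j j' := by
      intro j'
      rw [Matrix.mul_apply, Finset.mul_sum]
    simp only [this, hmul, Matrix.one_apply]
    simp [Finset.sum_ite_eq, eq_comm]
  refine ⟨?_, ?_, key⟩
  · rw [hfstar]
    refine Submodule.sum_mem _ fun j _ => Submodule.sum_mem _ fun k _ => ?_
    exact Submodule.smul_mem _ _ (Submodule.subset_span ⟨k, rfl⟩)
  · intro g hg
    induction hg using Submodule.span_induction with
    | mem x hx => obtain ⟨j, rfl⟩ := hx; exact key j
    | zero => simp
    | add x y _ _ hx hy => rw [inner_add_left, hx, hy, add_zero]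
    | smul c x _ hx => rw [inner_smul_left, hx, mul_zero]
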